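/- Let L ⊆ L' be even non-degenerate integral lattices with L of finite index in L'. Then the stabilizer in O(L') of the subgroup I = L/L'(M) of Q = L'/L'(M) is contained in O(L), where M is the exponent of L'/L. Consequently O(L) ∩ O(L') has finite index in O(L'), and in particular the stable orthogonal group Õ⁺(L) has finite index in O⁺(L'). -/

import Mathlib

/-- A rational number is an integer. -/
def IsIntQ (q : ℚ) : Prop := ∃ n : ℤ, q = (n : ℚ)

lemma cast_smul_mem {V : Type*} [AddCommGroup V] [Module ℚ V] (L : Submodule ℤ V) {v : V}
    (hv : v ∈ L) (k : ℤ) : (k:ℚ) • v ∈ L := by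
  rw [Int.cast_smul_eq_zsmul]; exact L.smul_mem k hv

lemma ncast_smul_mem {V : Type*} [AddCommGroup V] [Module ℚ V] (L : Submodule ℤ V) {v : V}
    (hv : v ∈ L) (k : ℕ) : (k:ℚ) • v ∈ L := by
  have : ((k:ℤ):ℚ) • v ∈ L := cast_smul_mem L hv k
  simpa using this

lemma clear_denom {V : Type*} [AddCommGroup V] [Module ℚ V] (L : Submodule ℤ V) {v : V}
    (hv : v ∈ Submodule.span ℚ (L : Set V)) : ∃ n : ℕ, 0 < n ∧ (n:ℚ) • v ∈ L := by
  induction hv using Submodule.span_induction with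
  | mem x hx => exact ⟨1, one_pos, by simpa using hx⟩
  | zero => exact ⟨1, one_pos, by simp⟩
  | add x y _ _ hx hy =>
      obtain ⟨n,hn,hnx⟩ := hx; obtain ⟨m,hm,hmy⟩ := hy
      refine ⟨n*m, Nat.mul_pos hn hm, ?_⟩
      have : ((n*m : ℕ):ℚ) • (x + y) = ((m:ℤ):ℚ) • ((n:ℚ) • x) + ((n:ℤ):ℚ) • ((m:ℚ) • y) := by
        push_cast
        rw [smul_add, smul_smul, smul_smul]
        ring_nf
      rw [this]
      exact L.add_mem (cast_smul_mem L hnx _) (cast_smul_mem L hmy _)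
  | smul q x _ hx =>
      obtain ⟨n,hn,hnx⟩ := hx
      refine ⟨q.den * n, Nat.mul_pos q.pos hn, ?_⟩
      have : ((q.den * n : ℕ):ℚ) • (q • x) = ((q.num:ℤ):ℚ) • ((n:ℚ) • x) := by
        push_cast
        rw [smul_smul, smul_smul]
        congr 1
        rw [mul_comm (q.den:ℚ) (n:ℚ), mul_assoc, Rat.den_mul_eq_num]
        ring
      rw [this]
      exact cast_smul_mem L hnx _

lemma dual_bound {V : Type*} [AddCommGroup V] [Module ℚ V] [FiniteDimensional ℚ V]
    (B : V →ₗ[ℚ] V →ₗ[ℚ] ℚ)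
    (hnd : ∀ x : V, (∀ y : V, B x y = 0) → x = 0)
    (L : Submodule ℤ V)
    (hfull : Submodule.span ℚ (L : Set V) = ⊤)
    (clear : ∀ v : V, ∃ n : ℕ, 0 < n ∧ (n:ℚ) • v ∈ L) :
    ∃ D : ℕ, 0 < D ∧ ∀ x : V, (∀ y ∈ L, IsIntQ (B x y)) → (D:ℚ) • x ∈ L := by
  obtain ⟨s₀, hs₀L, hs₀span, hs₀li⟩ := exists_linearIndependent ℚ (L : Set V)
  rw [hfull] at hs₀span
  have hspan : ⊤ ≤ Submodule.span ℚ (Set.range ((↑) : s₀ → V)) := by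
    rw [Subtype.range_coe]; exact le_of_eq hs₀span.symm
  let b : Module.Basis s₀ ℚ V := Module.Basis.mk hs₀li hspan
  haveI : Fintype s₀ := FiniteDimensional.fintypeBasisIndex b
  haveI : DecidableEq s₀ := Classical.decEq _
  have hbL : ∀ i : s₀, (b i : V) ∈ L := by
    intro i; rw [Module.Basis.mk_apply]; exact hs₀L i.2
  let φ : V →ₗ[ℚ] (s₀ → ℚ) := LinearMap.pi (fun i => B.flip (b i))
  have hinj : Function.Injective φ := by
    rw [injective_iff_map_eq_zero]
    intro x hx
    apply hnd
    intro y
    have hBx : B x = 0 := by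
      apply b.ext
      intro i
      exact congrFun hx i
    rw [hBx]; rfl
  have hsurj : Function.Surjective φ := by
    rw [← LinearMap.injective_iff_surjective_of_finrank_eq_finrank ?_]
    · exact hinj
    · rw [Module.finrank_fintype_fun_eq_card, Module.finrank_eq_card_basis b]
  let e : V ≃ₗ[ℚ] (s₀ → ℚ) := LinearEquiv.ofBijective φ ⟨hinj, hsurj⟩
  let w : s₀ → V := fun i => e.symm (Pi.single i 1)
  have key : ∀ x : V, x = ∑ i, (B x (b i)) • w i := by
    intro x
    apply e.injective
    rw [map_sum]
    have : ∀ i, e ((B x (b i)) • w i) = Pi.single i (B x (b i)) := by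
      intro i
      rw [map_smul]
      show (B x (b i)) • e (e.symm (Pi.single i 1)) = _
      rw [e.apply_symm_apply]
      ext j
      simp [Pi.single_apply, mul_comm]
    simp only [this]
    funext j
    rw [Finset.sum_apply]
    have : e x j = B x (b j) := rfl
    rw [this]
    simp [Pi.single_apply]
  choose n hn hnw using fun i => clear (w i)
  refine ⟨∏ i, n i, Finset.prod_pos (fun i _ => hn i), ?_⟩
  have hD : ∀ i, ((∏ j, n j : ℕ):ℚ) • w i ∈ L := by
    intro i
    have h1 : (∏ j, n j) = (∏ j ∈ Finset.univ.erase i, n j) * n i :=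
      (Finset.prod_erase_mul _ _ (Finset.mem_univ i)).symm
    rw [h1, Nat.cast_mul, mul_smul]
    exact ncast_smul_mem L (hnw i) _
  intro x hx
  rw [key x, Finset.smul_sum]
  apply Submodule.sum_mem
  intro i _
  obtain ⟨m, hm⟩ := hx (b i) (hbL i)
  rw [hm, smul_comm]
  exact cast_smul_mem L (hD i) m

lemma quot_finite {V : Type*} [AddCommGroup V]
    (L' : Submodule ℤ V) (s : Finset V) (hs : Submodule.span ℤ (↑s : Set V) = L')
    (N : ℕ) (hN : 0 < N)
    (NL' : Submodule ℤ V) (hNL : ∀ x ∈ L', (N:ℤ) • x ∈ NL') :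
    Finite ↥(L'.map NL'.mkQ) := by
  haveI : NeZero N := ⟨hN.ne'⟩
  have hsL : ∀ x ∈ s, x ∈ L' := by
    intro x hx; rw [← hs]; exact Submodule.subset_span hx
  set f : (s → ZMod N) → V ⧸ NL' :=
    fun c => ∑ x : s, ((c x).val : ℤ) • NL'.mkQ x.1 with hf
  have hsub : (↑(L'.map NL'.mkQ) : Set (V ⧸ NL')) ⊆ Set.range f := by
    rintro p hp
    obtain ⟨u, hu, rfl⟩ := hp
    rw [show L' = Submodule.span ℤ (↑s : Set V) from hs.symm, SetLike.mem_coe,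
      Submodule.mem_span_finset] at hu
    obtain ⟨a, -, ha⟩ := hu
    refine ⟨fun x => ((a x.1 : ℤ) : ZMod N), ?_⟩
    rw [hf]
    have hterm : ∀ x : s, ((((a x.1 : ℤ) : ZMod N)).val : ℤ) • NL'.mkQ x.1
        = a x.1 • NL'.mkQ x.1 := by
      intro x
      have hval : ((((a x.1 : ℤ) : ZMod N)).val : ℤ) = (a x.1) % N := ZMod.val_intCast _
      have : ((((a x.1 : ℤ) : ZMod N)).val : ℤ) = (a x.1 : ℤ) + (N:ℤ) * (-(a x.1 / N)) := by
        rw [hval, Int.emod_def]; ring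
      rw [this, add_smul, mul_smul]
      have hz : (N:ℤ) • NL'.mkQ x.1 = 0 := by
        rw [← map_zsmul, Submodule.mkQ_apply, Submodule.Quotient.mk_eq_zero]
        exact hNL _ (hsL _ x.2)
      rw [smul_comm, hz, smul_zero, add_zero]
    simp only [hterm]
    rw [Finset.sum_coe_sort s (fun x => a x • NL'.mkQ x)]
    have h2 : ∀ x ∈ s, a x • NL'.mkQ x = NL'.mkQ (a x • x) := by
      intro x _; rw [map_zsmul]
    rw [Finset.sum_congr rfl h2, ← map_sum, ha]
  have : (Set.range f).Finite := Set.finite_range f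
  exact (this.subset hsub).to_subtype

/-- for a finite-index inclusion of lattices `L ⊆ L'` with
`M·L' ⊆ L ⊆ L'` (`M` the exponent of `L'/L`):
(1) any isometry of `L'` stabilising the subgroup `I = L/M·L'` of `Q = L'/M·L'`
preserves `L`, so lies in `O(L)`;
(2) consequently the subgroup `Õ(L) ∩ O(L')` has finite index in `O(L')`
(expressed by a finite set of coset representatives; the stable group `Õ(L)` is the
kernel of `O(L) → O(D(L))`, expressed concretely via `g x - x ∈ L` for `x ∈ L^∨`). -/
theorem stmt_4 {V : Type*} [AddCommGroup V] [Module ℚ V] [FiniteDimensional ℚ V]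
    (B : V →ₗ[ℚ] V →ₗ[ℚ] ℚ)
    (hsymm : ∀ x y : V, B x y = B y x)
    (hnd : ∀ x : V, (∀ y : V, B x y = 0) → x = 0)
    (L L' : Submodule ℤ V)
    (hfg : L'.FG)
    (hfull : Submodule.span ℚ (L : Set V) = ⊤)
    (hint : ∀ x ∈ L', ∀ y ∈ L', IsIntQ (B x y))
    (heven : ∀ x ∈ L', ∃ k : ℤ, B x x = 2 * (k : ℚ))
    (hLL' : L ≤ L')
    (M : ℕ) (hM : 0 < M)
    (hML : ∀ x ∈ L', (M : ℚ) • x ∈ L) :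
    -- (1) the stabiliser of `I = L/M·L'` in `O(L')` is contained in `O(L)`
    ((∀ g : V ≃ₗ[ℚ] V, (∀ x y : V, B (g x) (g y) = B x y) →
        ⇑g '' (L' : Set V) = (L' : Set V) →
        (∀ x ∈ L, ∃ y ∈ L, ∃ z ∈ L', g x - y = (M : ℚ) • z) →
        (∀ x ∈ L, ∃ y ∈ L, ∃ z ∈ L', g.symm x - y = (M : ℚ) • z) →
        ⇑g '' (L : Set V) = (L : Set V)) ∧
    -- (2) `Õ(L) ∩ O(L')` has finite index in `O(L')`
    (∃ T : Finset (V ≃ₗ[ℚ] V),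
      ∀ g : V ≃ₗ[ℚ] V, (∀ x y : V, B (g x) (g y) = B x y) →
        ⇑g '' (L' : Set V) = (L' : Set V) →
        ∃ t ∈ T,
          (∀ x y : V, B ((g.trans t.symm) x) ((g.trans t.symm) y) = B x y) ∧
          ⇑(g.trans t.symm) '' (L' : Set V) = (L' : Set V) ∧
          ⇑(g.trans t.symm) '' (L : Set V) = (L : Set V) ∧
          (∀ x : V, (∀ y ∈ L, IsIntQ (B x y)) → (g.trans t.symm) x - x ∈ L))) := by
  classical
  have symm_img : ∀ (u : V ≃ₗ[ℚ] V) (S : Set V), ⇑u '' S = S → ⇑u.symm '' S = S := by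
    intro u S hS
    conv_lhs => rw [← hS]
    rw [← Set.image_comp]
    simp
  have img_mem : ∀ (u : V ≃ₗ[ℚ] V), ⇑u '' (L' : Set V) = L' → ∀ x ∈ L', u x ∈ L' := by
    intro u hu x hx
    have : u x ∈ (⇑u '' (L' : Set V)) := ⟨x, hx, rfl⟩
    rw [hu] at this
    exact this
  constructor
  · -- Part (1)
    intro g hgB hgL' hgI hgIsymm
    apply Set.Subset.antisymm
    · rintro _ ⟨x, hx, rfl⟩
      obtain ⟨y, hy, z, hz, hxyz⟩ := hgI x hx
      have : g x = (M:ℚ) • z + y := by rw [← hxyz]; abel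
      show g x ∈ L
      rw [this]
      exact L.add_mem (hML z hz) hy
    · intro x hx
      obtain ⟨y, hy, z, hz, hxyz⟩ := hgIsymm x hx
      refine ⟨g.symm x, ?_, by simp⟩
      have : g.symm x = (M:ℚ) • z + y := by rw [← hxyz]; abel
      show g.symm x ∈ L
      rw [this]
      exact L.add_mem (hML z hz) hy
  · -- Part (2)
    have hclear : ∀ v : V, ∃ n : ℕ, 0 < n ∧ (n:ℚ) • v ∈ L := by
      intro v
      exact clear_denom L (by rw [hfull]; trivial)
    obtain ⟨D, hDpos, hD⟩ := dual_bound B hnd L hfull hclear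
    obtain ⟨s, hs⟩ := hfg
    set N : ℕ := M * D with hN
    have hNpos : 0 < N := Nat.mul_pos hM hDpos
    set NL' : Submodule ℤ V := L'.map ((N:ℤ) • (LinearMap.id : V →ₗ[ℤ] V)) with hNL'
    have memNL' : ∀ x : V, x ∈ NL' ↔ ∃ y ∈ L', x = (N:ℚ) • y := by
      intro x
      simp only [hNL', Submodule.mem_map, LinearMap.smul_apply, LinearMap.id_apply]
      constructor
      · rintro ⟨y, hy, rfl⟩
        exact ⟨y, hy, by rw [← Int.cast_smul_eq_zsmul ℚ]; norm_num⟩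
      · rintro ⟨y, hy, rfl⟩
        exact ⟨y, hy, by rw [← Int.cast_smul_eq_zsmul ℚ]; norm_num⟩
    have hNLL : ∀ x ∈ NL', x ∈ L := by
      intro x hx
      obtain ⟨y, hy, rfl⟩ := (memNL' x).1 hx
      have : ((N:ℕ):ℚ) • y = (M:ℚ) • ((D:ℚ) • y) := by
        rw [smul_smul, hN]; push_cast; ring_nf
      rw [this]
      exact hML _ (ncast_smul_mem L' hy D)
    have hNLL' : ∀ x ∈ NL', x ∈ L' := fun x hx => hLL' (hNLL x hx)
    have hsL : ∀ x ∈ s, x ∈ L' := by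
      intro x hx; rw [← hs]; exact Submodule.subset_span hx
    haveI : Finite ↥(L'.map NL'.mkQ) := by
      apply quot_finite L' s hs N hNpos
      intro x hx
      exact ⟨x, hx, rfl⟩
    set P : Submodule ℤ (V ⧸ NL') := L'.map NL'.mkQ with hP
    set F : (V ≃ₗ[ℚ] V) → (s → V ⧸ NL') := fun g x => NL'.mkQ (g x.1) with hF
    set K : Set (V ≃ₗ[ℚ] V) :=
      {g | (∀ x y : V, B (g x) (g y) = B x y) ∧ ⇑g '' (L' : Set V) = (L' : Set V)} with hK
    have hEfin : (F '' K).Finite := by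
      apply Set.Finite.subset (Set.Finite.pi (fun _ : s => (P : Set (V ⧸ NL')).toFinite))
      rintro _ ⟨g, hg, rfl⟩
      intro x _
      exact ⟨g x.1, img_mem g hg.2 _ (hsL _ x.2), rfl⟩
    set rep : (s → V ⧸ NL') → (V ≃ₗ[ℚ] V) :=
      fun q => if h : ∃ g ∈ K, F g = q then h.choose else LinearEquiv.refl ℚ V with hrep
    refine ⟨hEfin.toFinset.image rep, ?_⟩
    intro g hgB hgL'
    have hgK : g ∈ K := ⟨hgB, hgL'⟩
    have hex : ∃ g' ∈ K, F g' = F g := ⟨g, hgK, rfl⟩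
    set t : V ≃ₗ[ℚ] V := rep (F g) with htdef
    have htK : t ∈ K ∧ F t = F g := by
      have : t = hex.choose := by rw [htdef, hrep]; exact dif_pos hex
      rw [this]
      exact ⟨hex.choose_spec.1, hex.choose_spec.2⟩
    obtain ⟨⟨htB, htL'⟩, htF⟩ := htK
    have htT : t ∈ hEfin.toFinset.image rep :=
      Finset.mem_image.2 ⟨F g, (Set.Finite.mem_toFinset _).2 ⟨g, hgK, rfl⟩, rfl⟩
    have htsL' : ⇑t.symm '' (L' : Set V) = L' := symm_img t _ htL'
    set h : V ≃ₗ[ℚ] V := g.trans t.symm with hh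
    have hhL' : ⇑h '' (L' : Set V) = L' := by
      have : ⇑h = ⇑t.symm ∘ ⇑g := rfl
      rw [this, Set.image_comp, hgL', htsL']
    -- key congruence: ∀ u ∈ L', h u - u ∈ NL'
    have hgt : ∀ u ∈ L', g u - t u ∈ NL' := by
      intro u hu
      rw [← hs] at hu
      induction hu using Submodule.span_induction with
      | mem x hx =>
          have h1 : NL'.mkQ (t x) = NL'.mkQ (g x) := congrFun htF ⟨x, hx⟩
          rw [Submodule.mkQ_apply, Submodule.mkQ_apply, Submodule.Quotient.eq] at h1
          have := NL'.neg_mem h1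
          simpa using this
      | zero => simp
      | add x y _ _ ihx ihy =>
          have : g (x + y) - t (x + y) = (g x - t x) + (g y - t y) := by
            rw [map_add, map_add]; abel
          rw [this]
          exact NL'.add_mem ihx ihy
      | smul a x _ ih =>
          have : g (a • x) - t (a • x) = a • (g x - t x) := by
            rw [map_zsmul, map_zsmul, smul_sub]
          rw [this]
          exact NL'.smul_mem a ih
    have hdiff : ∀ u ∈ L', h u - u ∈ NL' := by
      intro u hu
      have h1 : h u - u = t.symm (g u - t u) := by
        rw [map_sub, t.symm_apply_apply]; rfl
      rw [h1]
      obtain ⟨z, hz, hz2⟩ := (memNL' _).1 (hgt u hu)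
      rw [hz2, map_smul]
      exact (memNL' _).2 ⟨t.symm z, img_mem t.symm htsL' _ hz, rfl⟩
    refine ⟨t, htT, ?_, hhL', ?_, ?_⟩
    · -- isometry
      intro x y
      show B (t.symm (g x)) (t.symm (g y)) = B x y
      calc B (t.symm (g x)) (t.symm (g y))
          = B (t (t.symm (g x))) (t (t.symm (g y))) := (htB _ _).symm
        _ = B (g x) (g y) := by rw [t.apply_symm_apply, t.apply_symm_apply]
        _ = B x y := hgB x y
    · -- h '' L = L
      have hmemL : ∀ x ∈ L, h x ∈ L := by
        intro x hx
        have h1 : h x - x ∈ L := hNLL _ (hdiff x (hLL' hx))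
        have : h x = (h x - x) + x := by abel
        rw [this]
        exact L.add_mem h1 hx
      have hmemLsymm : ∀ x ∈ L, h.symm x ∈ L := by
        intro x hx
        have hv : h.symm x ∈ L' := img_mem h.symm (symm_img h _ hhL') _ (hLL' hx)
        have h1 : h (h.symm x) - h.symm x ∈ NL' := hdiff _ hv
        rw [h.apply_symm_apply] at h1
        have h2 : h.symm x - x ∈ L := by
          have := hNLL _ (NL'.neg_mem h1)
          simpa using this
        have : h.symm x = (h.symm x - x) + x := by abel
        rw [this]
        exact L.add_mem h2 hx
      apply Set.Subset.antisymm
      · rintro _ ⟨x, hx, rfl⟩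
        exact hmemL x hx
      · intro x hx
        exact ⟨h.symm x, hmemLsymm x hx, h.apply_symm_apply x⟩
    · -- stable: h x - x ∈ L for x ∈ L^∨
      intro x hx
      have hDx : (D:ℚ) • x ∈ L := hD x hx
      have h1 : h ((D:ℚ) • x) - (D:ℚ) • x ∈ NL' := hdiff _ (hLL' hDx)
      obtain ⟨z, hz, hz2⟩ := (memNL' _).1 h1
      have h2 : (D:ℚ) • (h x - x) = (D:ℚ) • ((M:ℚ) • z) := by
        rw [smul_sub, ← map_smul]
        rw [smul_smul]
        have : (D:ℚ) * (M:ℚ) = ((N:ℕ):ℚ) := by rw [hN]; push_cast; ring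
        rw [this, ← hz2]
      have hDne : (D:ℚ) ≠ 0 := by positivity
      have h3 : h x - x = (M:ℚ) • z := smul_right_injective V hDne h2
      rw [h3]
      exact hML z hz
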